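/- Let $X$ be a real Banach space, $x_0 \in X$, $f_0 \in X^*$ with $\|x_0\| = \|f_0\| = 1$, $\langle f_0, x_0\rangle = 1$, and $0 < \delta < 1/2$, and let $|||\cdot|||$ be the norm $|||\cdot|||_{(x_0,f_0),\delta}$ defined above. Then the closed unit ball of $|||\cdot|||$ equals the closed convex hull of $(B_{\|\cdot\|} \setminus C(f_0,1-\delta)) \cup \{(1-\delta/2)x_0, -(1-\delta/2)x_0\}$, where $B_{\|\cdot\|}$ is the closed unit ball of $\|\cdot\|$ and $C(f_0,1-\delta) = \{y : |\langle f_0,y\rangle| \geq (1-\delta)\|y\|\}$. -/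

import Mathlib

set_option maxHeartbeats 2000000 in
theorem stmt_9 (X : Type*) [NormedAddCommGroup X] [NormedSpace ℝ X] [CompleteSpace X]
    (x0 : X) (f0 : X →L[ℝ] ℝ) (hx0 : ‖x0‖ = 1) (hf0 : ‖f0‖ = 1) (hfx : f0 x0 = 1)
    (δ : ℝ) (hδ0 : 0 < δ) (hδ1 : δ < 1/2)
    (ψ : X → ℝ) (hψ0 : ∀ y, 0 ≤ ψ y)
    (hψeq : ∀ y, ψ y = (1 - δ) * ‖y + (ψ y - f0 y) • x0‖)
    (hψuniq : ∀ y t, 0 ≤ t → t = (1 - δ) * ‖y + (t - f0 y) • x0‖ → t = ψ y)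
    (N : X → ℝ)
    (hN1 : ∀ y, |f0 y| < (1 - δ) * ‖y‖ → N y = ‖y‖)
    (hN2 : ∀ y, (1 - δ) * ‖y‖ ≤ f0 y → N y = ψ y / (1 - δ) + (f0 y - ψ y) / (1 - δ/2))
    (hN3 : ∀ y, f0 y ≤ -((1 - δ) * ‖y‖) → N y = N (-y))
    :
    {x : X | N x ≤ 1} =
      closure (convexHull ℝ
        ((Metric.closedBall (0 : X) 1 \ {y : X | (1 - δ) * ‖y‖ ≤ |f0 y|}) ∪
          {(1 - δ/2) • x0, -((1 - δ/2) • x0)})) := by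
  have hδ' : (0:ℝ) < 1 - δ := by linarith
  have hδ'' : (0:ℝ) < 1 - δ/2 := by linarith
  set S : Set X := (Metric.closedBall (0 : X) 1 \ {y : X | (1 - δ) * ‖y‖ ≤ |f0 y|}) ∪
          {(1 - δ/2) • x0, -((1 - δ/2) • x0)} with hS
  set T : Set X := closure (convexHull ℝ S) with hT
  set a : X := (1 - δ/2) • x0 with haa
  have haS : a ∈ S := by rw [hS]; right; left; rfl
  have hanegS : -a ∈ S := by rw [hS]; right; right; rfl
  have hna : ‖a‖ = 1 - δ/2 := by
    rw [haa, norm_smul, hx0, mul_one, Real.norm_eq_abs, abs_of_pos hδ'']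
  have hfa : f0 a = 1 - δ/2 := by rw [haa, map_smul, smul_eq_mul, hfx, mul_one]
  have hSball : S ⊆ Metric.closedBall (0:X) 1 := by
    intro w hw
    rcases hw with ⟨hb, _⟩ | hp
    · exact hb
    · rcases hp with h | h
      · rw [h, Metric.mem_closedBall, dist_zero_right, hna]; linarith
      · simp only [Set.mem_singleton_iff] at h
        rw [h, Metric.mem_closedBall, dist_zero_right, norm_neg, hna]; linarith
  have hST : S ⊆ T := (subset_convexHull ℝ S).trans subset_closure
  have hTconv : Convex ℝ T := (convex_convexHull ℝ S).closure
  have h0T : (0:X) ∈ T := by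
    have h := hTconv (hST haS) (hST hanegS) (by norm_num : (0:ℝ) ≤ 1/2)
      (by norm_num : (0:ℝ) ≤ 1/2) (by norm_num)
    simpa using h
  have hSnegmem : ∀ w ∈ S, -w ∈ S := by
    intro w hw
    rcases hw with ⟨hb, hc⟩ | hp
    · left
      constructor
      · rw [Metric.mem_closedBall, dist_zero_right, norm_neg]
        rwa [Metric.mem_closedBall, dist_zero_right] at hb
      · intro hmem
        exact hc (by simpa [norm_neg, map_neg, abs_neg] using hmem)
    · rcases hp with h | h
      · right; right; rw [h]; rfl
      · simp only [Set.mem_singleton_iff] at h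
        right; left; rw [h, neg_neg]
  have hSneg : -S = S := by
    ext w
    rw [Set.mem_neg]
    constructor
    · intro h; simpa using hSnegmem _ h
    · intro h; exact hSnegmem _ h
  have hTsymm : ∀ w ∈ T, -w ∈ T := by
    intro w hw
    have e1 : closure (-(convexHull ℝ S)) = -T := by
      have := (Homeomorph.neg X).image_closure (convexHull ℝ S)
      simpa [Set.image_neg_eq_neg] using this.symm
    have e2 : -T = T := by
      rw [← e1, ← convexHull_neg, hSneg, hT]
    rw [← e2, Set.mem_neg, neg_neg]
    exact hw
  -- half-space lemma
  have hhalf : ∀ (F : X →L[ℝ] ℝ), (∀ w ∈ S, F w ≤ 1) → ∀ y ∈ T, F y ≤ 1 := by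
    intro F hF y hy
    have hcl : IsClosed {w : X | F w ≤ 1} := isClosed_le F.continuous continuous_const
    have hcv : Convex ℝ {w : X | F w ≤ 1} := convex_halfSpace_le ⟨map_add F, map_smul F⟩ 1
    exact closure_minimal (convexHull_min hF hcv) hcl hy
  -- ψ ≤ f0 on the cone
  have hψle : ∀ y, (1 - δ) * ‖y‖ ≤ f0 y → ψ y ≤ f0 y := by
    intro y hy
    by_contra hcon
    push_neg at hcon
    have h2 : ‖y + (ψ y - f0 y) • x0‖ ≤ ‖y‖ + (ψ y - f0 y) := by
      calc ‖y + (ψ y - f0 y) • x0‖ ≤ ‖y‖ + ‖(ψ y - f0 y) • x0‖ := norm_add_le _ _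
        _ = ‖y‖ + (ψ y - f0 y) := by
            rw [norm_smul, hx0, mul_one, Real.norm_eq_abs, abs_of_pos (by linarith)]
    have h3 : ψ y ≤ (1 - δ) * (‖y‖ + (ψ y - f0 y)) :=
      (hψeq y).trans_le (mul_le_mul_of_nonneg_left h2 hδ'.le)
    nlinarith
  -- boundary unit vectors of the cone are in T
  have huclo : ∀ u : X, ‖u‖ = 1 → f0 u = 1 - δ → u ∈ T := by
    intro u hun hfu
    have hcl : u ∈ closure S := by
      rw [Metric.mem_closure_iff]
      intro ε hε
      set η := min (ε/3) (1 - δ) with hη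
      have hη0 : 0 < η := lt_min (by linarith) hδ'
      have hη1 : η ≤ 1 - δ := min_le_right _ _
      have hη2 : η ≤ ε/3 := min_le_left _ _
      have h1η : (0:ℝ) < 1 + η := by linarith
      have hv0 : (0:ℝ) < (1+η)⁻¹ := inv_pos.mpr h1η
      refine ⟨(1+η)⁻¹ • (u - η • x0), Or.inl ⟨?_, ?_⟩, ?_⟩
      · rw [Metric.mem_closedBall, dist_zero_right, norm_smul, Real.norm_eq_abs,
          abs_of_pos hv0]
        have hub : ‖u - η • x0‖ ≤ 1 + η := by
          calc ‖u - η • x0‖ ≤ ‖u‖ + ‖η • x0‖ := norm_sub_le _ _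
            _ = 1 + η := by
                rw [hun, norm_smul, hx0, mul_one, Real.norm_eq_abs, abs_of_pos hη0]
        calc (1+η)⁻¹ * ‖u - η • x0‖ ≤ (1+η)⁻¹ * (1+η) :=
              mul_le_mul_of_nonneg_left hub hv0.le
          _ = 1 := inv_mul_cancel₀ h1η.ne'
      · intro hmem
        simp only [Set.mem_setOf_eq] at hmem
        have hfb : f0 ((1+η)⁻¹ • (u - η • x0)) = (1+η)⁻¹ * (1 - δ - η) := by
          rw [map_smul, smul_eq_mul, map_sub, map_smul, smul_eq_mul, hfu, hfx, mul_one]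
        have hlb : 1 - η ≤ ‖u - η • x0‖ := by
          have h := norm_sub_norm_le u (η • x0)
          rw [hun, norm_smul, hx0, mul_one, Real.norm_eq_abs, abs_of_pos hη0] at h
          linarith
        have hnb : ‖(1+η)⁻¹ • (u - η • x0)‖ = (1+η)⁻¹ * ‖u - η • x0‖ := by
          rw [norm_smul, Real.norm_eq_abs, abs_of_pos hv0]
        rw [hnb, hfb, abs_of_nonneg (mul_nonneg hv0.le (by linarith))] at hmem
        have hA : (1-δ)*((1+η)⁻¹*(1-η)) ≤ (1-δ)*((1+η)⁻¹*‖u - η • x0‖) :=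
          mul_le_mul_of_nonneg_left (mul_le_mul_of_nonneg_left hlb hv0.le) hδ'.le
        have hB := hA.trans hmem
        have hD : (1-δ)*(1-η) ≤ 1-δ-η := by
          have h := mul_le_mul_of_nonneg_left hB h1η.le
          calc (1-δ)*(1-η) = (1+η)*((1-δ)*((1+η)⁻¹*(1-η))) := by field_simp
            _ ≤ (1+η)*((1+η)⁻¹*(1-δ-η)) := h
            _ = 1-δ-η := by field_simp
        nlinarith [mul_pos hδ0 hη0]
      · rw [dist_eq_norm]
        have h1 : ((1+η)⁻¹ * (1+η)) • u = u := by rw [inv_mul_cancel₀ h1η.ne', one_smul]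
        have he : u - (1+η)⁻¹ • (u - η • x0) = (1+η)⁻¹ • (η • u + η • x0) := by
          have h2 : 1 - (1+η)⁻¹ = (1+η)⁻¹ * η := by field_simp; ring
          calc u - (1+η)⁻¹ • (u - η • x0)
              = (1 - (1+η)⁻¹) • u + ((1+η)⁻¹ * η) • x0 := by
                rw [smul_sub, sub_smul, one_smul, smul_smul]; abel
            _ = (1+η)⁻¹ • (η • u + η • x0) := by
                rw [h2, smul_add, smul_smul, smul_smul]
        rw [he, norm_smul, Real.norm_eq_abs, abs_of_pos hv0]
        have hub2 : ‖η • u + η • x0‖ ≤ 2*η := by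
          calc ‖η • u + η • x0‖ ≤ ‖η • u‖ + ‖η • x0‖ := norm_add_le _ _
            _ = 2*η := by
                rw [norm_smul, norm_smul, hun, hx0, Real.norm_eq_abs, abs_of_pos hη0]
                ring
        have hinv1 : (1+η)⁻¹ ≤ 1 := by
          rw [inv_le_one_iff₀]; right; linarith
        calc (1+η)⁻¹ * ‖η • u + η • x0‖ ≤ 1 * (2*η) := by
              apply mul_le_mul hinv1 hub2 (norm_nonneg _) zero_le_one
          _ < ε := by rw [one_mul]; linarith
    exact closure_mono (subset_convexHull ℝ S) hcl
  -- Part A, cone case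
  have hconeA : ∀ y : X, (1 - δ) * ‖y‖ ≤ f0 y → N y ≤ 1 → y ∈ T := by
    intro y hcone hy
    have hs0 : 0 ≤ f0 y - ψ y := sub_nonneg.mpr (hψle y hcone)
    set z := y + (ψ y - f0 y) • x0 with hz
    have hzn : ψ y = (1 - δ) * ‖z‖ := hψeq y
    have hNy : N y = ‖z‖ + (f0 y - ψ y)/(1 - δ/2) := by
      rw [hN2 y hcone]
      congr 1
      rw [hzn, mul_comm, mul_div_assoc, div_self hδ'.ne', mul_one]
    have hyz : y = z + (f0 y - ψ y) • x0 := by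
      have h0 : (ψ y - f0 y) + (f0 y - ψ y) = 0 := by ring
      rw [hz, add_assoc, ← add_smul, h0, zero_smul, add_zero]
    by_cases hzz : z = (0:X)
    · have hl2 : (f0 y - ψ y)/(1 - δ/2) ≤ 1 := by
        rw [hNy, hzz, norm_zero] at hy; linarith
      have hl2' : 0 ≤ (f0 y - ψ y)/(1 - δ/2) := div_nonneg hs0 hδ''.le
      have hy0 : y = (f0 y - ψ y) • x0 := by
        conv_lhs => rw [hyz]
        rw [hzz, zero_add]
      have hy2 : y = ((f0 y - ψ y)/(1 - δ/2)) • a + (1 - (f0 y - ψ y)/(1 - δ/2)) • (0:X) := by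
        rw [smul_zero, add_zero, haa, smul_smul, div_mul_cancel₀ _ hδ''.ne']
        exact hy0
      rw [hy2]
      exact hTconv (hST haS) h0T hl2' (by linarith) (by ring)
    · have hzpos : 0 < ‖z‖ := norm_pos_iff.mpr hzz
      have hfz : f0 z = ψ y := by
        rw [hz, map_add, map_smul, smul_eq_mul, hfx, mul_one]; ring
      obtain ⟨u, huz, hun, hfu⟩ :
          ∃ u : X, ‖z‖ • u = z ∧ ‖u‖ = 1 ∧ f0 u = 1 - δ := by
        refine ⟨‖z‖⁻¹ • z, ?_, ?_, ?_⟩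
        · rw [smul_smul, mul_inv_cancel₀ hzpos.ne', one_smul]
        · rw [norm_smul, Real.norm_eq_abs, abs_of_pos (inv_pos.mpr hzpos),
            inv_mul_cancel₀ hzpos.ne']
        · rw [map_smul, smul_eq_mul, hfz, hzn]
          field_simp
      have huT : u ∈ T := huclo u hun hfu
      obtain ⟨l1, l2, hl1d, hl2d⟩ :
          ∃ l1 l2 : ℝ, l1 = ‖z‖ ∧ l2 = (f0 y - ψ y)/(1 - δ/2) := ⟨_, _, rfl, rfl⟩
      have hsum : l1 + l2 ≤ 1 := by rw [hl1d, hl2d, ← hNy]; exact hy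
      have hl10 : 0 < l1 := hl1d ▸ hzpos
      have hl20 : 0 ≤ l2 := hl2d ▸ div_nonneg hs0 hδ''.le
      have hyrep : y = l1 • u + l2 • a := by
        rw [hl1d, hl2d, huz, haa, smul_smul, div_mul_cancel₀ _ hδ''.ne', ← hyz]
      obtain ⟨t, htd⟩ : ∃ t : ℝ, t = l1 + l2 := ⟨_, rfl⟩
      have ht0 : 0 < t := by rw [htd]; positivity
      have hvT : (l1/t) • u + (l2/t) • a ∈ T :=
        hTconv huT (hST haS) (by positivity) (by positivity)
          (by rw [htd]; field_simp)
      have hfin : y = t • ((l1/t) • u + (l2/t) • a) + (1 - t) • (0:X) := by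
        rw [smul_zero, add_zero, smul_add, smul_smul, smul_smul,
          mul_div_cancel₀ _ ht0.ne', mul_div_cancel₀ _ ht0.ne']
        exact hyrep
      rw [hfin]
      exact hTconv hvT h0T ht0.le (by rw [htd]; linarith) (by ring)
  -- Part B, cone case
  have hconeB : ∀ y ∈ T, (1 - δ) * ‖y‖ ≤ f0 y → N y ≤ 1 := by
    intro y hyT hcone
    have hs0 : 0 ≤ f0 y - ψ y := sub_nonneg.mpr (hψle y hcone)
    set z := y + (ψ y - f0 y) • x0 with hz
    have hzn : ψ y = (1 - δ) * ‖z‖ := hψeq y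
    have hNy : N y = ‖z‖ + (f0 y - ψ y)/(1 - δ/2) := by
      rw [hN2 y hcone]
      congr 1
      rw [hzn, mul_comm, mul_div_assoc, div_self hδ'.ne', mul_one]
    have hyz : y = z + (f0 y - ψ y) • x0 := by
      have h0 : (ψ y - f0 y) + (f0 y - ψ y) = 0 := by ring
      rw [hz, add_assoc, ← add_smul, h0, zero_smul, add_zero]
    by_cases hzz : z = (0:X)
    · -- show f0 y ≤ 1 - δ/2 using the functional (1-δ/2)⁻¹ • f0
      have hψz : ψ y = 0 := by rw [hzn, hzz, norm_zero, mul_zero]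
      have hF : ∀ w ∈ S, ((1 - δ/2)⁻¹ • f0) w ≤ 1 := by
        intro w hw
        simp only [ContinuousLinearMap.coe_smul', Pi.smul_apply, smul_eq_mul]
        rcases hw with ⟨hb, hc⟩ | hp
        · have h1 : |f0 w| < (1 - δ) * ‖w‖ := not_le.mp hc
          have h2 : ‖w‖ ≤ 1 := by
            rwa [Metric.mem_closedBall, dist_zero_right] at hb
          have h3 : f0 w ≤ 1 - δ := by
            have := (le_abs_self (f0 w)).trans h1.le
            nlinarith
          rw [inv_mul_le_iff₀ hδ'']
          linarith
        · rcases hp with h | h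
          · rw [h, hfa, inv_mul_cancel₀ hδ''.ne']
          · simp only [Set.mem_singleton_iff] at h
            rw [h, map_neg, hfa]
            have : (0:ℝ) < (1 - δ/2)⁻¹ * (1 - δ/2) := by positivity
            nlinarith [inv_pos.mpr hδ'']
      have hfy := hhalf _ hF y hyT
      simp only [ContinuousLinearMap.coe_smul', Pi.smul_apply, smul_eq_mul] at hfy
      rw [hNy, hzz, norm_zero, hψz]
      rw [inv_mul_le_iff₀ hδ''] at hfy
      rw [zero_add, sub_zero, div_le_one hδ'']
      linarith
    · have hzpos : 0 < ‖z‖ := norm_pos_iff.mpr hzz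
      have hfz : f0 z = ψ y := by
        rw [hz, map_add, map_smul, smul_eq_mul, hfx, mul_one]; ring
      obtain ⟨g, hg1, hgz⟩ := exists_dual_vector ℝ z (norm_ne_zero_iff.mpr hzz)
      obtain ⟨c, hcd⟩ : ∃ c : ℝ, c = g x0 := ⟨_, rfl⟩
      have hcabs : |c| ≤ 1 := by
        rw [hcd, ← Real.norm_eq_abs]
        calc ‖g x0‖ ≤ ‖g‖ * ‖x0‖ := g.le_opNorm x0
          _ = 1 := by rw [hg1, hx0, mul_one]
      have hc1 : c ≤ 1 := (abs_le.mp hcabs).2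
      obtain ⟨D, hDd⟩ : ∃ D : ℝ, D = 1 - c * (1 - δ) := ⟨_, rfl⟩
      have hDpos : 0 < D := by
        rw [hDd]
        nlinarith
      obtain ⟨β, hβd⟩ : ∃ β : ℝ, β = (1/(1 - δ/2) - c)/D := ⟨_, rfl⟩
      obtain ⟨α, hαd⟩ : ∃ α : ℝ, α = 1 - β * (1 - δ) := ⟨_, rfl⟩
      have hone : (1:ℝ) < 1/(1 - δ/2) := by
        rw [lt_div_iff₀ hδ'']
        linarith
      have hβ0 : 0 ≤ β := by
        rw [hβd]
        apply div_nonneg _ hDpos.le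
        linarith
      have hα0 : 0 ≤ α := by
        have h1 : (1/(1 - δ/2) - c) * (1 - δ) ≤ D := by
          rw [hDd]
          have h2 : (1 - δ)/(1 - δ/2) ≤ 1 := by
            rw [div_le_one hδ'']
            linarith
          have h3 : (1/(1 - δ/2)) * (1 - δ) ≤ 1 := by
            rw [one_div, inv_mul_eq_div]
            exact h2
          nlinarith
        rw [hαd, hβd, div_mul_eq_mul_div, sub_nonneg, div_le_one hDpos]
        exact h1
      have hkey1 : α + β * (1 - δ) = 1 := by rw [hαd]; ring
      have hkey2 : α * c + β = 1/(1 - δ/2) := by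
        have : α * c + β = c + β * D := by rw [hαd, hDd]; ring
        rw [this, hβd, div_mul_cancel₀ _ hDpos.ne']
        ring
      have hFS : ∀ w ∈ S, (α • g + β • f0) w ≤ 1 := by
        intro w hw
        simp only [ContinuousLinearMap.add_apply, ContinuousLinearMap.coe_smul',
          Pi.smul_apply, smul_eq_mul]
        rcases hw with ⟨hb, hc⟩ | hp
        · have h1 : |f0 w| ≤ (1 - δ) * ‖w‖ := (not_le.mp hc).le
          have h2 : ‖w‖ ≤ 1 := by rwa [Metric.mem_closedBall, dist_zero_right] at hb
          have h3 : g w ≤ ‖w‖ := by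
            calc g w ≤ |g w| := le_abs_self _
              _ = ‖g w‖ := (Real.norm_eq_abs _).symm
              _ ≤ ‖g‖ * ‖w‖ := g.le_opNorm w
              _ = ‖w‖ := by rw [hg1, one_mul]
          have h4 : f0 w ≤ (1 - δ) * ‖w‖ := (le_abs_self _).trans h1
          calc α * g w + β * f0 w
              ≤ α * ‖w‖ + β * ((1 - δ) * ‖w‖) :=
                add_le_add (mul_le_mul_of_nonneg_left h3 hα0)
                  (mul_le_mul_of_nonneg_left h4 hβ0)
            _ = (α + β * (1 - δ)) * ‖w‖ := by ring
            _ = ‖w‖ := by rw [hkey1, one_mul]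
            _ ≤ 1 := h2
        · have hga : g a = (1 - δ/2) * c := by
            rw [haa, map_smul, smul_eq_mul, hcd]
          rcases hp with h | h
          · rw [h, hga, hfa]
            have he2 : α * ((1 - δ/2) * c) + β * (1 - δ/2) = (1 - δ/2) * (α * c + β) := by
              ring
            rw [he2, hkey2, mul_one_div, div_self hδ''.ne']
          · simp only [Set.mem_singleton_iff] at h
            rw [h, map_neg, map_neg, hga, hfa]
            have he : α * -((1 - δ/2) * c) + β * -(1 - δ/2) = -((1 - δ/2) * (α * c + β)) := by
              ring
            rw [he, hkey2, mul_one_div, div_self hδ''.ne']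
            norm_num
      have hFy : (α • g + β • f0) y = N y := by
        simp only [ContinuousLinearMap.add_apply, ContinuousLinearMap.coe_smul',
          Pi.smul_apply, smul_eq_mul]
        obtain ⟨sv, hsvd⟩ : ∃ sv : ℝ, sv = f0 y - ψ y := ⟨_, rfl⟩
        have hgz' : g z = ‖z‖ := by exact_mod_cast hgz
        have hgy : g y = ‖z‖ + sv * c := by
          conv_lhs => rw [hyz]
          rw [map_add, map_smul, smul_eq_mul, hgz', hcd, hsvd]
        have hfy : f0 y = (1 - δ) * ‖z‖ + sv := by rw [hsvd, ← hzn]; ring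
        calc α * g y + β * f0 y
            = α * (‖z‖ + sv * c) + β * ((1 - δ) * ‖z‖ + sv) := by rw [hgy, hfy]
          _ = (α + β * (1 - δ)) * ‖z‖ + (α * c + β) * sv := by ring
          _ = ‖z‖ + sv / (1 - δ/2) := by
              rw [hkey1, hkey2, one_mul]
              ring
          _ = N y := by rw [hNy, hsvd]
      have := hhalf _ hFS y hyT
      rw [hFy] at this
      exact this
  -- final assembly
  apply Set.Subset.antisymm
  · intro y hy
    simp only [Set.mem_setOf_eq] at hy
    rcases lt_or_ge (|f0 y|) ((1 - δ) * ‖y‖) with h1 | h1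
    · apply hST
      left
      refine ⟨?_, not_le.mpr h1⟩
      rw [Metric.mem_closedBall, dist_zero_right, ← hN1 y h1]
      exact hy
    · rcases le_or_gt 0 (f0 y) with h2 | h2
      · exact hconeA y (by rwa [abs_of_nonneg h2] at h1) hy
      · have h3 : f0 y ≤ -((1 - δ) * ‖y‖) := by
          rw [abs_of_neg h2] at h1; linarith
        have h4 : (1 - δ) * ‖-y‖ ≤ f0 (-y) := by
          rw [map_neg, norm_neg]
          rw [abs_of_neg h2] at h1
          linarith
        have h5 : N (-y) ≤ 1 := by rw [← hN3 y h3]; exact hy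
        have h6 : -y ∈ T := hconeA (-y) h4 h5
        have := hTsymm (-y) h6
        rwa [neg_neg] at this
  · intro y hy
    simp only [Set.mem_setOf_eq]
    rcases lt_or_ge (|f0 y|) ((1 - δ) * ‖y‖) with h1 | h1
    · rw [hN1 y h1]
      have hball : T ⊆ Metric.closedBall (0:X) 1 :=
        closure_minimal (convexHull_min hSball (convex_closedBall 0 1))
          Metric.isClosed_closedBall
      have := hball hy
      rwa [Metric.mem_closedBall, dist_zero_right] at this
    · rcases le_or_gt 0 (f0 y) with h2 | h2
      · exact hconeB y hy (by rwa [abs_of_nonneg h2] at h1)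
      · have h3 : f0 y ≤ -((1 - δ) * ‖y‖) := by
          rw [abs_of_neg h2] at h1; linarith
        rw [hN3 y h3]
        refine hconeB (-y) (hTsymm y hy) ?_
        rw [map_neg, norm_neg]
        rw [abs_of_neg h2] at h1
        linarith
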